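/- Value dominance of max⁺-aggregation: the max⁺-aggregation policy π⊕ satisfies V^{π⊕}_t(s) ≥ f⁺_t(s) = max_{k∈[K]} V^{π^k}_t(s) for every 0 ≤ t ≤ H and every s ∈ S. -/

import Mathlib

open scoped BigOperators

/-- Expectation of a real-valued function under a probability mass function on a finite type. -/
noncomputable def pexp {α : Type*} [Fintype α] (p : PMF α) (f : α → ℝ) : ℝ :=
  ∑ a, (p a).toReal * f a

lemma pexp_sum_one {α : Type*} [Fintype α] (p : PMF α) : ∑ a, (p a).toReal = 1 := by
  have h := p.tsum_coe
  rw [tsum_fintype] at h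
  have : (∑ a, p a).toReal = 1 := by rw [h]; simp
  rwa [ENNReal.toReal_sum (fun a _ => p.apply_ne_top a)] at this

lemma pexp_mono {α : Type*} [Fintype α] (p : PMF α) {f g : α → ℝ} (h : ∀ a, f a ≤ g a) :
    pexp p f ≤ pexp p g :=
  Finset.sum_le_sum fun a _ => mul_le_mul_of_nonneg_left (h a) ENNReal.toReal_nonneg

lemma pexp_le_const {α : Type*} [Fintype α] (p : PMF α) {f : α → ℝ} {c : ℝ}
    (h : ∀ a, f a ≤ c) : pexp p f ≤ c := by
  calc pexp p f ≤ pexp p (fun _ => c) := pexp_mono p h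
    _ = c := by unfold pexp; rw [← Finset.sum_mul, pexp_sum_one, one_mul]

lemma pexp_pure {α : Type*} [Fintype α] [DecidableEq α] (a : α) (f : α → ℝ) :
    pexp (PMF.pure a) f = f a := by
  unfold pexp
  rw [Finset.sum_eq_single a]
  · simp
  · intro b _ hb; simp [PMF.pure_apply, hb]
  · simp

/-- Value dominance of max⁺-aggregation: the max⁺-aggregation policy `π⊕` satisfies
`V^{π⊕}_t(s) ≥ f⁺_t(s) = max_{k∈[K]} V^{π^k}_t(s)` for every `0 ≤ t ≤ H` and every state `s`. -/
theorem maxplus_aggregation_value_dominance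
    {S A : Type*} [Fintype S] [Nonempty S] [Fintype A] [Nonempty A]
    (P : S → A → PMF S) (r : S → A → ℝ)
    (hr : ∀ s a, 0 ≤ r s a ∧ r s a ≤ 1)
    (H : ℕ)
    (K : ℕ) (hK : 1 ≤ K)
    (πs : Fin K → ℕ → S → PMF A)
    (Vs : Fin K → ℕ → S → ℝ)
    (hVsH : ∀ k s, Vs k H s = 0)
    (hVs : ∀ k t, t < H → ∀ s,
      Vs k t s = pexp (πs k t s) (fun a => r s a + pexp (P s a) (Vs k (t + 1))))
    (fplus : ℕ → S → ℝ)
    (hfplus : ∀ t s, fplus t s = ⨆ k : Fin K, Vs k t s)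
    (astar : ℕ → S → A)
    (hastar : ∀ t s a,
      r s a + pexp (P s a) (fplus (t + 1)) - fplus t s ≤
        r s (astar t s) + pexp (P s (astar t s)) (fplus (t + 1)) - fplus t s)
    (Vagg : ℕ → S → ℝ)
    (hVaggH : ∀ s, Vagg H s = 0)
    (hVagg : ∀ t, t < H → ∀ s,
      Vagg t s = pexp (PMF.pure (astar t s))
        (fun a => r s a + pexp (P s a) (Vagg (t + 1)))) :
    ∀ t, t ≤ H → ∀ s, fplus t s ≤ Vagg t s := by
  classical
  haveI : Nonempty (Fin K) := ⟨⟨0, hK⟩⟩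
  have key : ∀ d t, t + d = H → ∀ s, fplus t s ≤ Vagg t s := by
    intro d
    induction d with
    | zero =>
      intro t ht s
      simp only [Nat.add_zero] at ht
      subst ht
      rw [hfplus, hVaggH]
      exact ciSup_le fun k => le_of_eq (hVsH k s)
    | succ d ih =>
      intro t ht s
      have htH : t < H := by omega
      have ih' : ∀ s', fplus (t + 1) s' ≤ Vagg (t + 1) s' :=
        fun s' => ih (t + 1) (by omega) s'
      rw [hfplus]
      apply ciSup_le
      intro k
      have hVle : ∀ s', Vs k (t + 1) s' ≤ fplus (t + 1) s' := by
        intro s'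
        rw [hfplus]
        exact le_ciSup (f := fun k : Fin K => Vs k (t + 1) s') (Set.Finite.bddAbove (Set.finite_range _)) k
      calc Vs k t s
          = pexp (πs k t s) (fun a => r s a + pexp (P s a) (Vs k (t + 1))) :=
            hVs k t htH s
        _ ≤ pexp (πs k t s) (fun a => r s a + pexp (P s a) (fplus (t + 1))) :=
            pexp_mono _ fun a => by
              exact add_le_add_right (pexp_mono _ hVle) _
        _ ≤ r s (astar t s) + pexp (P s (astar t s)) (fplus (t + 1)) :=
            pexp_le_const _ fun a => by
              have := hastar t s a
              linarith
        _ ≤ r s (astar t s) + pexp (P s (astar t s)) (Vagg (t + 1)) :=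
            add_le_add_right (pexp_mono _ ih') _
        _ = Vagg t s := by rw [hVagg t htH s, pexp_pure]
  intro t ht s
  exact key (H - t) t (by omega) s
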